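/- Consider the Bayesian joint model in which θ_0 ~ π, X | θ_0 ~ f_{θ_0}, and, conditionally on X, θ̂_1, …, θ̂_B are i.i.d. draws from the posterior π(· | X) (conditionally independent of θ_0 given X). Then, after marginalizing over θ_0, the conditional density of X given (θ̂_1, …, θ̂_B) = (θ_1, …, θ_B) with respect to ν_𝒳 is exactly g_π(x | θ_{1:B}) ∝ (∏_{b=1}^B f_{θ_b}(x)) / f̄_π(x)^{B−1}. -/

import Mathlib

open MeasureTheory ProbabilityTheory ENNReal

open scoped Classical

noncomputable section

/-- The total variation distance `d_TV(P, Q) = sup_A |P(A) - Q(A)|` between two measures. -/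
def tvDist {Ω : Type*} [MeasurableSpace Ω] (P Q : Measure Ω) : ℝ≥0∞ :=
  ⨆ (s : Set Ω) (_ : MeasurableSet s), (P s - Q s) ⊔ (Q s - P s)

/-- The chi-squared divergence `χ²(Q ‖ P) = ∫ (dQ/dP - 1)² dP` if `Q ≪ P`, and `∞` otherwise. -/
def chiSq {Ω : Type*} [MeasurableSpace Ω] (Q P : Measure Ω) : ℝ≥0∞ :=
  if Q ≪ P then ∫⁻ ω, ((Q.rnDeriv P ω - 1) ⊔ (1 - Q.rnDeriv P ω)) ^ 2 ∂P else ⊤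

/-- A measure on `Fin n → 𝒳` is exchangeable if it is invariant under every permutation of the
coordinates. -/
def Exchangeable {𝒳 : Type*} [MeasurableSpace 𝒳] {n : ℕ} (Q : Measure (Fin n → 𝒳)) : Prop :=
  ∀ σ : Equiv.Perm (Fin n), Measure.map (fun v => v ∘ σ) Q = Q

/-- The distance to exchangeability: the infimum, over exchangeable probability measures `Q`,
of the total variation distance to `Q`. -/
def dExch {𝒳 : Type*} [MeasurableSpace 𝒳] {n : ℕ} (P : Measure (Fin n → 𝒳)) : ℝ≥0∞ :=
  ⨅ (Q : Measure (Fin n → 𝒳)) (_ : IsProbabilityMeasure Q) (_ : Exchangeable Q), tvDist P Q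

/-- The p-value `(1 + #{m : T(v (m+1)) ≥ T(v 0)}) / (M + 1)`, where `v 0` is the data and
`v 1, …, v M` are the copies. -/
def pval {𝒳 : Type*} {M : ℕ} (T : 𝒳 → ℝ) (v : Fin (M + 1) → 𝒳) : ℝ :=
  (1 + ((Finset.univ.filter fun m : Fin M => T (v 0) ≤ T (v m.succ)).card : ℝ)) / (M + 1)

variable {Θ 𝒳 : Type*} [MeasurableSpace Θ] [MeasurableSpace 𝒳]

/-- The marginal likelihood `f̄_π(x) = ∫ π(θ) f_θ(x) dν_Θ(θ)`. -/
def marg (νΘ : Measure Θ) (π : Θ → ℝ≥0∞) (f : Θ → 𝒳 → ℝ≥0∞) (x : 𝒳) : ℝ≥0∞ :=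
  ∫⁻ θ, π θ * f θ x ∂νΘ

/-- The posterior density `π(θ | x) = π(θ) f_θ(x) / f̄_π(x)`. -/
def postDens (νΘ : Measure Θ) (π : Θ → ℝ≥0∞) (f : Θ → 𝒳 → ℝ≥0∞) (x : 𝒳) (θ : Θ) : ℝ≥0∞ :=
  π θ * f θ x / marg νΘ π f x

/-- The posterior distribution of `θ` given `x`. -/
def postMeas (νΘ : Measure Θ) (π : Θ → ℝ≥0∞) (f : Θ → 𝒳 → ℝ≥0∞) (x : 𝒳) : Measure Θ :=
  νΘ.withDensity (postDens νΘ π f x)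

/-- The unnormalized density of the copies: `(∏_b f_{θ_b}(x)) / f̄_π(x)^{B-1}`. -/
def gDensU (νΘ : Measure Θ) (π : Θ → ℝ≥0∞) (f : Θ → 𝒳 → ℝ≥0∞) {B : ℕ}
    (θs : Fin B → Θ) (x : 𝒳) : ℝ≥0∞ :=
  (∏ b, f (θs b) x) / (marg νΘ π f x) ^ (B - 1)

/-- The normalizing constant of `gDensU`. -/
def gNorm (νΘ : Measure Θ) (ν𝒳 : Measure 𝒳) (π : Θ → ℝ≥0∞) (f : Θ → 𝒳 → ℝ≥0∞) {B : ℕ}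
    (θs : Fin B → Θ) : ℝ≥0∞ :=
  ∫⁻ x, gDensU νΘ π f θs x ∂ν𝒳

/-- The probability distribution `g_π(· | θ_{1:B})` on `𝒳`. -/
def gMeas (νΘ : Measure Θ) (ν𝒳 : Measure 𝒳) (π : Θ → ℝ≥0∞) (f : Θ → 𝒳 → ℝ≥0∞) {B : ℕ}
    (θs : Fin B → Θ) : Measure 𝒳 :=
  ν𝒳.withDensity fun x => gDensU νΘ π f θs x / gNorm νΘ ν𝒳 π f θs

/-- The prior concentration `ε(π₀) = d_TV(f_{θ₀}, f̄_{π₀})`. -/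
def priorEps (νΘ : Measure Θ) (ν𝒳 : Measure 𝒳) (f : Θ → 𝒳 → ℝ≥0∞) (θ0 : Θ)
    (π0 : Θ → ℝ≥0∞) : ℝ≥0∞ :=
  tvDist (ν𝒳.withDensity (f θ0)) (ν𝒳.withDensity (marg νΘ π0 f))

/-- The posterior sensitivity `Δ(π₀) = E_{X ~ f_{θ₀}}[χ²(π₀(·|X) ‖ π(·|X))^{1/2}]`. -/
def priorDelta (νΘ : Measure Θ) (ν𝒳 : Measure 𝒳) (π : Θ → ℝ≥0∞) (f : Θ → 𝒳 → ℝ≥0∞)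
    (θ0 : Θ) (π0 : Θ → ℝ≥0∞) : ℝ≥0∞ :=
  ∫⁻ x, (chiSq (postMeas νΘ π0 f x) (postMeas νΘ π f x)) ^ (1 / 2 : ℝ)
    ∂(ν𝒳.withDensity (f θ0))

/-- The bound `inf_{π₀} { ε(π₀) + Δ(π₀) / (2√B) }`, the infimum over all prior densities `π₀`
on `Θ` whose marginal `f̄_{π₀}` is positive wherever some `f_θ` is positive. -/
def acssBound (νΘ : Measure Θ) (ν𝒳 : Measure 𝒳) (π : Θ → ℝ≥0∞) (f : Θ → 𝒳 → ℝ≥0∞)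
    (θ0 : Θ) (B : ℕ) : ℝ≥0∞ :=
  sInf { r : ℝ≥0∞ | ∃ π0 : Θ → ℝ≥0∞, Measurable π0 ∧
    IsProbabilityMeasure (νΘ.withDensity π0) ∧
    (∀ θ x, f θ x ≠ 0 → marg νΘ π0 f x ≠ 0) ∧
    r = priorEps νΘ ν𝒳 f θ0 π0
        + priorDelta νΘ ν𝒳 π f θ0 π0 / (2 * (B : ℝ≥0∞) ^ (1 / 2 : ℝ)) }

section ACSSAux

variable {Θ' 𝒳' : Type*} [MeasurableSpace Θ'] [MeasurableSpace 𝒳']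

lemma acss_measurable_marg (νΘ : Measure Θ') [SFinite νΘ] {π : Θ' → ℝ≥0∞} {f : Θ' → 𝒳' → ℝ≥0∞}
    (hf : Measurable (Function.uncurry f)) (hπ : Measurable π) :
    Measurable (marg νΘ π f) := by
  unfold marg
  exact Measurable.lintegral_prod_right'
    (f := fun p : 𝒳' × Θ' => π p.2 * f p.2 p.1)
    ((hπ.comp measurable_snd).mul (hf.comp measurable_swap))

lemma acss_measurable_postDens (νΘ : Measure Θ') [SFinite νΘ] {π : Θ' → ℝ≥0∞}
    {f : Θ' → 𝒳' → ℝ≥0∞} (hf : Measurable (Function.uncurry f)) (hπ : Measurable π) :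
    Measurable (fun q : 𝒳' × Θ' => postDens νΘ π f q.1 q.2) := by
  unfold postDens
  exact ((hπ.comp measurable_snd).mul (hf.comp measurable_swap)).div
    ((acss_measurable_marg νΘ hf hπ).comp measurable_fst)

lemma acss_measurable_gDensU (νΘ : Measure Θ') [SFinite νΘ] {π : Θ' → ℝ≥0∞}
    {f : Θ' → 𝒳' → ℝ≥0∞} (hf : Measurable (Function.uncurry f)) (hπ : Measurable π) {B : ℕ} :
    Measurable (fun q : (Fin B → Θ') × 𝒳' => gDensU νΘ π f q.1 q.2) := by
  unfold gDensU
  refine Measurable.div ?_ (((acss_measurable_marg νΘ hf hπ).comp measurable_snd).pow_const _)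
  exact Finset.measurable_prod _ fun b _ =>
    Measurable.comp' (f := fun q : (Fin B → Θ') × 𝒳' => (q.1 b, q.2)) hf (((measurable_pi_apply b).comp measurable_fst).prodMk measurable_snd)

lemma acss_measurable_gNorm (νΘ : Measure Θ') (ν𝒳 : Measure 𝒳') [SFinite νΘ] [SFinite ν𝒳]
    {π : Θ' → ℝ≥0∞} {f : Θ' → 𝒳' → ℝ≥0∞}
    (hf : Measurable (Function.uncurry f)) (hπ : Measurable π) {B : ℕ} :
    Measurable (fun θs : Fin B → Θ' => gNorm νΘ ν𝒳 π f θs) := by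
  unfold gNorm
  exact Measurable.lintegral_prod_right' (acss_measurable_gDensU νΘ hf hπ)

lemma acss_key_pointwise (νΘ : Measure Θ') {π : Θ' → ℝ≥0∞} {f : Θ' → 𝒳' → ℝ≥0∞} {B : ℕ}
    (hB : 1 ≤ B) (x : 𝒳') (hx : marg νΘ π f x ≠ ⊤)
    (hs : ∀ θ, f θ x ≠ 0 → marg νΘ π f x ≠ 0) (θs : Fin B → Θ') :
    marg νΘ π f x * ∏ b, postDens νΘ π f x (θs b)
      = (∏ b, π (θs b)) * gDensU νΘ π f θs x := by
  have hfin : Nonempty (Fin B) := ⟨⟨0, hB⟩⟩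
  by_cases h0 : marg νΘ π f x = 0
  · have hprod0 : (∏ b, f (θs b) x) = 0 :=
      Finset.prod_eq_zero (Finset.mem_univ (Classical.arbitrary (Fin B)))
        (by by_contra hb; exact (hs _ hb) h0)
    unfold gDensU
    rw [h0, zero_mul, hprod0, ENNReal.zero_div, mul_zero]
  · unfold postDens gDensU
    simp_rw [div_eq_mul_inv, Finset.prod_mul_distrib, Finset.prod_const, Finset.card_univ,
      Fintype.card_fin]
    have hkey : ((marg νΘ π f x)⁻¹) ^ B * marg νΘ π f x = ((marg νΘ π f x) ^ (B - 1))⁻¹ := by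
      obtain ⟨k, rfl⟩ : ∃ k, B = k + 1 := ⟨B - 1, (Nat.succ_pred_eq_of_pos hB).symm⟩
      rw [pow_succ, Nat.add_sub_cancel, mul_assoc, ENNReal.inv_mul_cancel h0 hx, mul_one,
        ENNReal.inv_pow]
    rw [← hkey]
    ring

lemma acss_marg_ae_finite (νΘ : Measure Θ') (ν𝒳 : Measure 𝒳') [SigmaFinite νΘ] [SigmaFinite ν𝒳]
    {π : Θ' → ℝ≥0∞} {f : Θ' → 𝒳' → ℝ≥0∞}
    (hf : Measurable (Function.uncurry f)) (hπ : Measurable π)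
    (hfprob : ∀ θ, IsProbabilityMeasure (ν𝒳.withDensity (f θ)))
    (hπprob : IsProbabilityMeasure (νΘ.withDensity π)) :
    ∀ᵐ x ∂ν𝒳, marg νΘ π f x < ⊤ := by
  have hfint : ∀ θ, ∫⁻ x, f θ x ∂ν𝒳 = 1 := by
    intro θ
    have := (hfprob θ).measure_univ
    rwa [withDensity_apply _ MeasurableSet.univ, Measure.restrict_univ] at this
  have hπint : ∫⁻ θ, π θ ∂νΘ = 1 := by
    have := hπprob.measure_univ
    rwa [withDensity_apply _ MeasurableSet.univ, Measure.restrict_univ] at this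
  have h1 : ∫⁻ x, marg νΘ π f x ∂ν𝒳 = 1 := by
    unfold marg
    rw [lintegral_lintegral_swap (f := fun x θ => π θ * f θ x)
      ((hπ.comp measurable_snd).mul (hf.comp measurable_swap)).aemeasurable]
    calc ∫⁻ θ, ∫⁻ x, π θ * f θ x ∂ν𝒳 ∂νΘ
        = ∫⁻ θ, π θ * ∫⁻ x, f θ x ∂ν𝒳 ∂νΘ := by
          refine lintegral_congr fun θ => ?_
          exact lintegral_const_mul _ hf.of_uncurry_left
      _ = ∫⁻ θ, π θ ∂νΘ := by simp [hfint]
      _ = 1 := hπint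
  exact ae_lt_top (acss_measurable_marg νΘ hf hπ) (by simp [h1])

lemma acss_map_snd_withDensity {α β : Type*} [MeasurableSpace α] [MeasurableSpace β]
    (μ : Measure α) (ν : Measure β) [SigmaFinite μ] [SigmaFinite ν]
    (D : α × β → ℝ≥0∞) (hD : Measurable D) :
    Measure.map Prod.snd ((μ.prod ν).withDensity D)
      = ν.withDensity fun y => ∫⁻ x, D (x, y) ∂μ := by
  ext s hs
  rw [Measure.map_apply measurable_snd hs, withDensity_apply _ (measurable_snd hs),
    withDensity_apply _ hs]
  have hps : (Prod.snd ⁻¹' s : Set (α × β)) = Set.univ ×ˢ s := by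
    ext p; simp
  rw [hps, ← Measure.prod_restrict, Measure.restrict_univ]
  rw [lintegral_prod _ hD.aemeasurable]
  exact lintegral_lintegral_swap (f := fun x y => D (x, y)) hD.aemeasurable

lemma acss_map_swap_withDensity {α β : Type*} [MeasurableSpace α] [MeasurableSpace β]
    (μ : Measure α) (ν : Measure β) [SFinite μ] [SFinite ν]
    (D : α × β → ℝ≥0∞) (hD : Measurable D) :
    Measure.map Prod.swap ((μ.prod ν).withDensity D)
      = (ν.prod μ).withDensity (fun q => D q.swap) := by
  ext s hs
  rw [Measure.map_apply measurable_swap hs, withDensity_apply _ (measurable_swap hs),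
    withDensity_apply _ hs]
  exact (Measure.measurePreserving_swap).setLIntegral_comp_preimage hs
    (hD.comp measurable_swap)

end ACSSAux

/-- **Conditional distribution of `X` given the posterior draws in the Bayesian model.** In the
Bayesian joint model `θ₀ ~ π`, `X | θ₀ ~ f_{θ₀}`, and `θ̂_1, …, θ̂_B | X` i.i.d. from the
posterior `π(· | X)` (conditionally independent of `θ₀` given `X`), after marginalizing over
`θ₀` the conditional distribution of `X` given `θ̂_{1:B} = θ_{1:B}` is exactly
`g_π(· | θ_{1:B})`: for any Markov kernel `K` with `K θ_{1:B} = g_π(· | θ_{1:B})` for all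
`θ_{1:B}`, the (swapped) joint law of `(θ̂_{1:B}, X)` equals the composition of the marginal law
of `θ̂_{1:B}` with `K`. -/
theorem bayes_conditional_of_X_given_posterior_draws
    {Θ 𝒳 : Type*} [MeasurableSpace Θ] [MeasurableSpace 𝒳]
    (νΘ : Measure Θ) (ν𝒳 : Measure 𝒳) [SigmaFinite νΘ] [SigmaFinite ν𝒳]
    (f : Θ → 𝒳 → ℝ≥0∞) (hf : Measurable (Function.uncurry f))
    (hfprob : ∀ θ, IsProbabilityMeasure (ν𝒳.withDensity (f θ)))
    (π : Θ → ℝ≥0∞) (hπ : Measurable π) (hπpos : ∀ θ, 0 < π θ)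
    (hπprob : IsProbabilityMeasure (νΘ.withDensity π))
    (hsupp : ∀ θ x, f θ x ≠ 0 → marg νΘ π f x ≠ 0)
    (B : ℕ) (hB : 1 ≤ B)
    (hnorm : ∀ θs : Fin B → Θ,
      0 < gNorm νΘ ν𝒳 π f θs ∧ gNorm νΘ ν𝒳 π f θs < ⊤)
    (K : Kernel (Fin B → Θ) 𝒳) [IsMarkovKernel K]
    (hK : ∀ θs : Fin B → Θ, K θs = gMeas νΘ ν𝒳 π f θs) :
    Measure.map Prod.swap
        (Measure.map (fun p : Θ × 𝒳 × (Fin B → Θ) => p.2)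
          ((νΘ.prod (ν𝒳.prod (Measure.pi fun _ : Fin B => νΘ))).withDensity
            fun p => π p.1 * f p.1 p.2.1 * ∏ b, postDens νΘ π f p.2.1 (p.2.2 b)))
      = Measure.compProd
          (Measure.map (fun p : Θ × 𝒳 × (Fin B → Θ) => p.2.2)
            ((νΘ.prod (ν𝒳.prod (Measure.pi fun _ : Fin B => νΘ))).withDensity
              fun p => π p.1 * f p.1 p.2.1 * ∏ b, postDens νΘ π f p.2.1 (p.2.2 b)))
          K := by
  classical
  have hpost := acss_measurable_postDens νΘ (f := f) (π := π) hf hπ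
  have hgD := acss_measurable_gDensU νΘ (f := f) (π := π) hf hπ (B := B)
  have hgN := acss_measurable_gNorm νΘ ν𝒳 (f := f) (π := π) hf hπ (B := B)
  have hD : Measurable (fun p : Θ × 𝒳 × (Fin B → Θ) =>
      π p.1 * f p.1 p.2.1 * ∏ b, postDens νΘ π f p.2.1 (p.2.2 b)) := by
    refine ((hπ.comp measurable_fst).mul
      (Measurable.comp' (f := fun p : Θ × 𝒳 × (Fin B → Θ) => (p.1, p.2.1)) hf
        (measurable_fst.prodMk (measurable_fst.comp measurable_snd)))).mul ?_
    exact Finset.measurable_prod _ fun b _ =>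
      Measurable.comp' (f := fun p : Θ × 𝒳 × (Fin B → Θ) => (p.2.1, p.2.2 b)) hpost
        ((measurable_fst.comp measurable_snd).prodMk
          ((measurable_pi_apply b).comp (measurable_snd.comp measurable_snd)))
  have hG : Measurable (fun q : (Fin B → Θ) × 𝒳 =>
      (∏ b, π (q.1 b)) * gDensU νΘ π f q.1 q.2) :=
    (Finset.measurable_prod _ fun b _ =>
      hπ.comp ((measurable_pi_apply b).comp measurable_fst)).mul hgD
  have hH : Measurable (fun y : 𝒳 × (Fin B → Θ) =>
      (∏ b, π (y.2 b)) * gDensU νΘ π f y.2 y.1) := hG.comp measurable_swap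
  have hsec : ∀ θs : Fin B → Θ, Measurable fun x => gDensU νΘ π f θs x :=
    fun θs => hgD.comp (measurable_const.prodMk measurable_id)
  have hMdens : Measurable fun θs : Fin B → Θ =>
      (∏ b, π (θs b)) * gNorm νΘ ν𝒳 π f θs :=
    (Finset.measurable_prod _ fun b _ => hπ.comp (measurable_pi_apply b)).mul hgN
  -- Step A : marginalize out θ₀
  have hstepA :
      Measure.map (fun p : Θ × 𝒳 × (Fin B → Θ) => p.2)
          ((νΘ.prod (ν𝒳.prod (Measure.pi fun _ : Fin B => νΘ))).withDensity
            fun p => π p.1 * f p.1 p.2.1 * ∏ b, postDens νΘ π f p.2.1 (p.2.2 b))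
        = (ν𝒳.prod (Measure.pi fun _ : Fin B => νΘ)).withDensity
            (fun y => (∏ b, π (y.2 b)) * gDensU νΘ π f y.2 y.1) := by
    refine Eq.trans
      (acss_map_snd_withDensity νΘ (ν𝒳.prod (Measure.pi fun _ : Fin B => νΘ)) _ hD) ?_
    have hint : (fun y : 𝒳 × (Fin B → Θ) =>
          ∫⁻ θ, π θ * f θ y.1 * ∏ b, postDens νΘ π f y.1 (y.2 b) ∂νΘ)
        = fun y => marg νΘ π f y.1 * ∏ b, postDens νΘ π f y.1 (y.2 b) := by
      funext y
      rw [lintegral_mul_const _ (f := fun θ => π θ * f θ y.1) (hπ.mul hf.of_uncurry_right)]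
      rfl
    rw [hint]
    refine withDensity_congr_ae (ae_iff.mpr (measure_mono_null
      (t := {x | ¬ marg νΘ π f x < ⊤} ×ˢ Set.univ) (fun y hy => ?_) ?_))
    · show y ∈ ({x | ¬ marg νΘ π f x < ⊤} ×ˢ Set.univ : Set (𝒳 × (Fin B → Θ)))
      simp only [Set.mem_prod, Set.mem_setOf_eq, Set.mem_univ, and_true]
      intro hlt
      exact hy (acss_key_pointwise νΘ hB y.1 hlt.ne (fun θ h => hsupp θ y.1 h) y.2)
    · rw [Measure.prod_prod,
        ae_iff.mp (acss_marg_ae_finite νΘ ν𝒳 hf hπ hfprob hπprob), zero_mul]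
  -- Step C : marginal law of the posterior draws
  have hstepC :
      Measure.map (fun p : Θ × 𝒳 × (Fin B → Θ) => p.2.2)
          ((νΘ.prod (ν𝒳.prod (Measure.pi fun _ : Fin B => νΘ))).withDensity
            fun p => π p.1 * f p.1 p.2.1 * ∏ b, postDens νΘ π f p.2.1 (p.2.2 b))
        = (Measure.pi fun _ : Fin B => νΘ).withDensity
            (fun θs => (∏ b, π (θs b)) * gNorm νΘ ν𝒳 π f θs) := by
    have h2 : (fun p : Θ × 𝒳 × (Fin B → Θ) => p.2.2)
        = (Prod.snd : 𝒳 × (Fin B → Θ) → (Fin B → Θ)) ∘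
          (fun p : Θ × 𝒳 × (Fin B → Θ) => p.2) := rfl
    rw [h2, ← Measure.map_map measurable_snd measurable_snd, hstepA,
      acss_map_snd_withDensity ν𝒳 (Measure.pi fun _ : Fin B => νΘ) _ hH]
    congr 1
    funext θs
    show (∫⁻ x, (∏ b, π (θs b)) * gDensU νΘ π f θs x ∂ν𝒳)
      = (∏ b, π (θs b)) * gNorm νΘ ν𝒳 π f θs
    rw [lintegral_const_mul _ (hsec θs)]
    rfl
  -- rewrite both sides
  rw [hstepA, hstepC,
    acss_map_swap_withDensity ν𝒳 (Measure.pi fun _ : Fin B => νΘ) _ hH,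
    show (fun q : (Fin B → Θ) × 𝒳 =>
        (fun y : 𝒳 × (Fin B → Θ) => (∏ b, π (y.2 b)) * gDensU νΘ π f y.2 y.1) q.swap)
      = fun q : (Fin B → Θ) × 𝒳 => (∏ b, π (q.1 b)) * gDensU νΘ π f q.1 q.2 from rfl]
  -- Step D : identify the composition with the kernel
  ext s hs
  rw [Measure.compProd_apply hs, withDensity_apply _ hs,
    lintegral_withDensity_eq_lintegral_mul _ hMdens
      (Kernel.measurable_kernel_prodMk_left hs),
    ← lintegral_indicator hs, lintegral_prod _ ((hG.indicator hs).aemeasurable)]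
  refine lintegral_congr fun θs => ?_
  have hslice : MeasurableSet (Prod.mk θs ⁻¹' s) := measurable_prodMk_left hs
  have hN0 : gNorm νΘ ν𝒳 π f θs ≠ 0 := (hnorm θs).1.ne'
  have hNt : gNorm νΘ ν𝒳 π f θs ≠ ⊤ := (hnorm θs).2.ne
  have hKval : K θs (Prod.mk θs ⁻¹' s)
      = (∫⁻ x in Prod.mk θs ⁻¹' s, gDensU νΘ π f θs x ∂ν𝒳) * (gNorm νΘ ν𝒳 π f θs)⁻¹ := by
    rw [hK θs]
    unfold gMeas
    rw [withDensity_apply _ hslice]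
    simp_rw [div_eq_mul_inv]
    exact lintegral_mul_const' _ _ (ENNReal.inv_ne_top.mpr hN0)
  have hind : ∀ x : 𝒳,
      Set.indicator s (fun q : (Fin B → Θ) × 𝒳 => (∏ b, π (q.1 b)) * gDensU νΘ π f q.1 q.2)
        (θs, x)
      = Set.indicator (Prod.mk θs ⁻¹' s)
          (fun x => (∏ b, π (θs b)) * gDensU νΘ π f θs x) x := by
    intro x
    by_cases hxm : (θs, x) ∈ s <;> simp [Set.indicator, hxm]
  calc ∫⁻ x, Set.indicator s
        (fun q : (Fin B → Θ) × 𝒳 => (∏ b, π (q.1 b)) * gDensU νΘ π f q.1 q.2) (θs, x) ∂ν𝒳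
      = ∫⁻ x in Prod.mk θs ⁻¹' s, (∏ b, π (θs b)) * gDensU νΘ π f θs x ∂ν𝒳 := by
        rw [lintegral_congr hind, lintegral_indicator hslice]
    _ = (∏ b, π (θs b)) * ∫⁻ x in Prod.mk θs ⁻¹' s, gDensU νΘ π f θs x ∂ν𝒳 :=
        lintegral_const_mul _ (hsec θs)
    _ = ((fun θs : Fin B → Θ => (∏ b, π (θs b)) * gNorm νΘ ν𝒳 π f θs) *
          fun θs : Fin B → Θ => K θs (Prod.mk θs ⁻¹' s)) θs := by
        simp only [Pi.mul_apply]
        rw [hKval, mul_assoc]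
        congr 1
        rw [mul_comm (∫⁻ x in Prod.mk θs ⁻¹' s, gDensU νΘ π f θs x ∂ν𝒳), ← mul_assoc,
          ENNReal.mul_inv_cancel hN0 hNt, one_mul]
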